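/- arXiv:1501.04401 — 2 statements merged into one kernel-verified Lean document; each statement's English description precedes it below -/
import Mathlib

section
/- If {a, b, c, d, e} is a Diophantine quintuple with a < b < c < d < e such that the triple {a, b, d} is of kind 2(i), then b ≥ 1680 and d ≥ 10^8. -/
/-- `DiophantineQuintuple a b c d e` says that `a < b < c < d < e` are positive integers
such that the product of any two of them is one less than a perfect square. -/
def DiophantineQuintuple (a b c d e : ℕ) : Prop :=
  0 < a ∧ a < b ∧ b < c ∧ c < d ∧ d < e ∧
  (∃ k : ℕ, a * b + 1 = k ^ 2) ∧ (∃ k : ℕ, a * c + 1 = k ^ 2) ∧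
  (∃ k : ℕ, a * d + 1 = k ^ 2) ∧ (∃ k : ℕ, a * e + 1 = k ^ 2) ∧
  (∃ k : ℕ, b * c + 1 = k ^ 2) ∧ (∃ k : ℕ, b * d + 1 = k ^ 2) ∧
  (∃ k : ℕ, b * e + 1 = k ^ 2) ∧ (∃ k : ℕ, c * d + 1 = k ^ 2) ∧
  (∃ k : ℕ, c * e + 1 = k ^ 2) ∧ (∃ k : ℕ, d * e + 1 = k ^ 2)

/-- The triple `{a, b, d}` is of kind 2(i): it is of the second kind
(`b > 4a` and `b² ≤ d ≤ b⁵`) and moreover `4ab + a + b ≤ c ≤ b^(3/2)`. -/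
def Kind2i (a b c d : ℕ) : Prop :=
  b > 4 * a ∧ b ^ 2 ≤ d ∧ d ≤ b ^ 5 ∧
  4 * a * b + a + b ≤ c ∧ (c : ℝ) ≤ (b : ℝ) ^ ((3 : ℝ) / 2)

lemma prod_sq_ge (p q F ρ u v : ℕ) (hp : 1 ≤ p) (hq : 1 ≤ q)
    (h1 : p*q+1 = ρ^2) (h2 : p*F+1 = u^2) (h3 : q*F+1 = v^2) :
    p*q*F+1 ≤ ρ*u*v := by
  have key : (p*q*F+1)^2 ≤ (ρ*u*v)^2 := by
    have h : (ρ*u*v)^2 = (p*q+1)*((p*F+1)*(q*F+1)) := by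
      rw [mul_pow, mul_pow, ← h1, ← h2, ← h3]; ring
    rw [h]
    nlinarith [Nat.zero_le (p*q*F*F), Nat.zero_le (p*q*F), Nat.zero_le F]
  exact Nat.pow_le_pow_iff_left (n := 2) two_ne_zero |>.mp key

private lemma zh1 (x r : ℤ) (hx : 1 ≤ x) (hr : 0 ≤ r) : 1 ≤ x*(x+4*r) := by nlinarith

private lemma zh2 (E D Cz : ℤ) (h1 : 1 ≤ E) (h2 : 1 ≤ Cz) (h3 : 3*Cz ≤ D)
    (h4 : E*D ≤ (Cz-2)^2) : 2*E < Cz := by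
  nlinarith [mul_le_mul_of_nonneg_left h3 (by linarith : (0:ℤ) ≤ E)]

private lemma zh3 (u v : ℤ) (h0 : 0 ≤ u) (h : u ≤ v) : u^2 ≤ v^2 := by nlinarith

private lemma zh4 (P Q Cz RST : ℤ) (hP : 1 ≤ P) (hQ : 1 ≤ Q) (hC : 1 ≤ Cz)
    (hR : 0 ≤ RST) : 3*Cz ≤ P+Q+Cz+2*P*Q*Cz+2*RST := by
  have h : (1:ℤ)*1 ≤ P*Q := mul_le_mul hP hQ zero_le_one (by linarith)
  nlinarith [mul_le_mul_of_nonneg_right h (by linarith : (0:ℤ) ≤ Cz)]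

private lemma zh5 (E D : ℤ) (h : 1 ≤ E*D) (hD : 0 < D) : 1 ≤ E := by
  by_contra hc
  push_neg at hc
  nlinarith

set_option maxHeartbeats 1000000 in
lemma stepA (p q C ρ σ τ : ℕ) (hp : 1 ≤ p) (hq : 1 ≤ q)
    (h1 : p*q+1 = ρ^2) (h2 : p*C+1 = σ^2) (h3 : q*C+1 = τ^2)
    (hC1 : p+q+2*ρ+1 ≤ C) (hC2 : 2*(p+q) ≤ C) :
    ∃ F x y : ℕ, 1 ≤ F ∧ p*F+1 = x^2 ∧ q*F+1 = y^2 ∧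
      C = p+q+F+2*p*q*F+2*ρ*x*y ∧ 4*p*q*F+p+q+F+2 ≤ C := by
  have h1' : ((ρ:ℤ))^2 = (p:ℤ)*(q:ℤ)+1 := by exact_mod_cast h1.symm
  have h2' : ((σ:ℤ))^2 = (p:ℤ)*(C:ℤ)+1 := by exact_mod_cast h2.symm
  have h3' : ((τ:ℤ))^2 = (q:ℤ)*(C:ℤ)+1 := by exact_mod_cast h3.symm
  have hPpos : 1 ≤ (p:ℤ) := by exact_mod_cast hp
  have hQpos : 1 ≤ (q:ℤ) := by exact_mod_cast hq
  have hRpos : 0 ≤ (ρ:ℤ) := by positivity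
  have hC1' : (p:ℤ)+(q:ℤ)+2*(ρ:ℤ)+1 ≤ (C:ℤ) := by exact_mod_cast hC1
  have hC2' : 2*((p:ℤ)+(q:ℤ)) ≤ (C:ℤ) := by exact_mod_cast hC2
  have hCzpos : (1:ℤ) ≤ (C:ℤ) := by linarith
  have hRST : 0 ≤ (ρ:ℤ)*(σ:ℤ)*(τ:ℤ) := by positivity
  set E : ℤ := (p:ℤ)+(q:ℤ)+(C:ℤ)+2*(p:ℤ)*(q:ℤ)*(C:ℤ)-2*(ρ:ℤ)*(σ:ℤ)*(τ:ℤ) with hE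
  set D : ℤ := (p:ℤ)+(q:ℤ)+(C:ℤ)+2*(p:ℤ)*(q:ℤ)*(C:ℤ)+2*(ρ:ℤ)*(σ:ℤ)*(τ:ℤ) with hD
  have iii : (C:ℤ)*E+1 = ((σ:ℤ)*(τ:ℤ)-(C:ℤ)*(ρ:ℤ))^2 := by
    rw [hE]
    linear_combination (-((τ:ℤ)^2)) * h2' + (-((p:ℤ)*(C:ℤ)+1)) * h3' + (-((C:ℤ)^2)) * h1'
  have iv : E*D = ((C:ℤ)-(p:ℤ)-(q:ℤ))^2 - 4*((p:ℤ)*(q:ℤ)+1) := by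
    rw [hE, hD]
    linear_combination (-4*(σ:ℤ)^2*(τ:ℤ)^2) * h1' + (-4*((p:ℤ)*(q:ℤ)+1)*(τ:ℤ)^2) * h2'
      + (-4*((p:ℤ)*(q:ℤ)+1)*((p:ℤ)*(C:ℤ)+1)) * h3'
  have hD3 : 3*(C:ℤ) ≤ D := by
    rw [hD]; linarith [zh4 (p:ℤ) (q:ℤ) (C:ℤ) ((ρ:ℤ)*(σ:ℤ)*(τ:ℤ)) hPpos hQpos hCzpos hRST]
  have hDpos : 0 < D := by linarith
  have hprod : 1 ≤ E*D := by
    have hfac : E*D = ((C:ℤ)-(p:ℤ)-(q:ℤ)-2*(ρ:ℤ))*(((C:ℤ)-(p:ℤ)-(q:ℤ)-2*(ρ:ℤ))+4*(ρ:ℤ)) := by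
      rw [iv]; linear_combination (4:ℤ) * h1'
    rw [hfac]
    exact zh1 _ _ (by linarith) hRpos
  have hE1 : 1 ≤ E := zh5 E D hprod hDpos
  have hEDle : E*D ≤ ((C:ℤ)-2)^2 := by
    rw [iv]
    have := zh3 ((C:ℤ)-(p:ℤ)-(q:ℤ)) ((C:ℤ)-2) (by linarith) (by linarith)
    nlinarith [this, mul_pos (by linarith : (0:ℤ) < (p:ℤ)) (by linarith : (0:ℤ) < (q:ℤ))]
  have h2E : 2*E < (C:ℤ) := zh2 E D (C:ℤ) hE1 hCzpos hD3 hEDle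
  have pxE : (p:ℤ)*E+1 = ((ρ:ℤ)*(σ:ℤ)-(p:ℤ)*(τ:ℤ))^2 := by
    rw [hE]
    linear_combination (-((σ:ℤ)^2)) * h1' + (-((p:ℤ)*(q:ℤ)+1)) * h2' + (-((p:ℤ)^2)) * h3'
  have qyE : (q:ℤ)*E+1 = ((ρ:ℤ)*(τ:ℤ)-(q:ℤ)*(σ:ℤ))^2 := by
    rw [hE]
    linear_combination (-((τ:ℤ)^2)) * h1' + (-((q:ℤ)^2)) * h2' + (-((p:ℤ)*(q:ℤ)+1)) * h3'
  obtain ⟨F, hF⟩ : ∃ F : ℕ, (F : ℤ) = E := ⟨E.toNat, Int.toNat_of_nonneg (by linarith)⟩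
  have hF1 : 1 ≤ F := by
    have h : (1:ℤ) ≤ (F:ℤ) := by rw [hF]; exact hE1
    exact_mod_cast h
  set x : ℕ := ((ρ:ℤ)*(σ:ℤ)-(p:ℤ)*(τ:ℤ)).natAbs with hxdef
  set y : ℕ := ((ρ:ℤ)*(τ:ℤ)-(q:ℤ)*(σ:ℤ)).natAbs with hydef
  have hx' : ((x:ℤ))^2 = ((ρ:ℤ)*(σ:ℤ)-(p:ℤ)*(τ:ℤ))^2 := by
    rw [hxdef, Int.natAbs_sq]
  have hy' : ((y:ℤ))^2 = ((ρ:ℤ)*(τ:ℤ)-(q:ℤ)*(σ:ℤ))^2 := by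
    rw [hydef, Int.natAbs_sq]
  have hxnat : p*F+1 = x^2 := by
    have h : ((p*F+1 : ℕ) : ℤ) = ((x^2 : ℕ) : ℤ) := by
      push_cast
      rw [hF, hx']
      exact pxE
    exact_mod_cast h
  have hynat : q*F+1 = y^2 := by
    have h : ((q*F+1 : ℕ) : ℤ) = ((y^2 : ℕ) : ℤ) := by
      push_cast
      rw [hF, hy']
      exact qyE
    exact_mod_cast h
  have v : ((C:ℤ)+E-(p:ℤ)-(q:ℤ))^2 = 4*((p:ℤ)*(q:ℤ)+1)*((C:ℤ)*E+1) := by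
    rw [iii, hE]
    linear_combination (-4*((C:ℤ)^2*((p:ℤ)*(q:ℤ)+1) - (σ:ℤ)^2*(τ:ℤ)^2)) * h1'
  have vii : ((C:ℤ)-((p:ℤ)+(q:ℤ)+E+2*(p:ℤ)*(q:ℤ)*E))^2
      = 4*((p:ℤ)*(q:ℤ)+1)*(((p:ℤ)*E+1)*((q:ℤ)*E+1)) := by
    linear_combination v
  have vii' : ((C:ℤ)-((p:ℤ)+(q:ℤ)+E+2*(p:ℤ)*(q:ℤ)*E))^2 = (2*(ρ:ℤ)*(x:ℤ)*(y:ℤ))^2 := by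
    rw [vii, pxE, qyE, ← hx', ← hy', ← h1']; ring
  have hsplit : ((C:ℤ)-((p:ℤ)+(q:ℤ)+E+2*(p:ℤ)*(q:ℤ)*E) - 2*(ρ:ℤ)*(x:ℤ)*(y:ℤ))
      * ((C:ℤ)-((p:ℤ)+(q:ℤ)+E+2*(p:ℤ)*(q:ℤ)*E) + 2*(ρ:ℤ)*(x:ℤ)*(y:ℤ)) = 0 := by
    linear_combination vii'
  have hbnd := prod_sq_ge p q F ρ x y hp hq h1 hxnat hynat
  have hbz : ((p:ℤ)*(q:ℤ)*(F:ℤ)+1) ≤ (ρ:ℤ)*(x:ℤ)*(y:ℤ) := by exact_mod_cast hbnd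
  have hbz' : (p:ℤ)*(q:ℤ)*E+1 ≤ (ρ:ℤ)*(x:ℤ)*(y:ℤ) := by rw [← hF]; exact hbz
  rcases mul_eq_zero.mp hsplit with hcase | hcase
  · have hCeq : (C:ℤ) = ((p+q+F+2*p*q*F+2*ρ*x*y : ℕ) : ℤ) := by
      push_cast
      rw [hF]
      linarith [hcase]
    have hCeqN : C = p+q+F+2*p*q*F+2*ρ*x*y := by exact_mod_cast hCeq
    refine ⟨F, x, y, hF1, hxnat, hynat, hCeqN, ?_⟩
    rw [hCeqN]
    linarith [hbnd]
  · exfalso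
    linarith [hcase, hbz', h2E, hC2']

lemma no3 : ∀ P < 41, 13 ≤ P → ∀ Y < 71, Y*Y ≠ 3*P^2 - 2 := by decide
lemma no8 : ∀ P < 41, 33 ≤ P → ∀ Y < 116, Y*Y ≠ 8*P^2 - 7 := by decide
lemma no24 : ∀ P < 58, 46 ≤ P → ∀ Y < 82, Y*Y ≠ 2*P^2 - 1 := by decide

lemma fam3 (b P Y : ℕ) (h1 : 145 ≤ b) (h2 : b ≤ 1679)
    (hP : b+1 = P^2) (hY : 3*b+1 = Y^2) : False := by
  have hPl : 13 ≤ P := by by_contra h; push_neg at h; nlinarith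
  have hPu : P < 41 := by by_contra h; push_neg at h; nlinarith
  have hYu : Y < 71 := by by_contra h; push_neg at h; nlinarith
  have e : 3*P^2 = 3*b+3 := by rw [← hP]; ring
  have e2 : 3*P^2 - 2 = 3*b+1 := by rw [e]; omega
  have key : Y*Y = 3*P^2 - 2 := by rw [e2, hY]; exact (pow_two Y).symm
  exact no3 P hPu hPl Y hYu key

lemma fam8 (b P Y : ℕ) (h1 : 1025 ≤ b) (h2 : b ≤ 1679)
    (hP : b+1 = P^2) (hY : 8*b+1 = Y^2) : False := by
  have hPl : 33 ≤ P := by by_contra h; push_neg at h; nlinarith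
  have hPu : P < 41 := by by_contra h; push_neg at h; nlinarith
  have hYu : Y < 116 := by by_contra h; push_neg at h; nlinarith
  have e : 8*P^2 = 8*b+8 := by rw [← hP]; ring
  have e2 : 8*P^2 - 7 = 8*b+1 := by rw [e]; omega
  have key : Y*Y = 8*P^2 - 7 := by rw [e2, hY]; exact (pow_two Y).symm
  exact no8 P hPu hPl Y hYu key

lemma fam24 (b P Y : ℕ) (h1 : 1025 ≤ b) (h2 : b ≤ 1679)
    (hP : 2*b+1 = P^2) (hY : 4*b+1 = Y^2) : False := by
  have hPl : 46 ≤ P := by by_contra h; push_neg at h; nlinarith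
  have hPu : P < 58 := by by_contra h; push_neg at h; nlinarith
  have hYu : Y < 82 := by by_contra h; push_neg at h; nlinarith
  have e : 2*P^2 = 4*b+2 := by rw [← hP]; ring
  have e2 : 2*P^2 - 1 = 4*b+1 := by rw [e]; omega
  have key : Y*Y = 2*P^2 - 1 := by rw [e2, hY]; exact (pow_two Y).symm
  exact no24 P hPu hPl Y hYu key


private lemma nh1 (m x : ℕ) (hm : 1 ≤ m) (h : m+1 = x^2) : 2 ≤ x := by
  by_contra hc
  push_neg at hc
  interval_cases x <;> omega

private lemma nh2 (m x : ℕ) (h : m+1 = x^2) (hx : 2 ≤ x) : 3 ≤ m := by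
  nlinarith [h, hx]

private lemma nh3 (m r : ℕ) (hm : 5 ≤ m) (h : m+1 = r^2) : r ≤ m := by
  by_contra hc
  push_neg at hc
  nlinarith [h, hc]

private lemma nh4 (b : ℕ) (h : 1680 ≤ b) : 4*b^3+16 ≤ b^4 := by
  have h1 : 1680*b^3 ≤ b*b^3 := Nat.mul_le_mul_right (b^3) h
  have h2 : 1 ≤ b^3 := Nat.one_le_pow 3 b (by omega)
  have h3 : b*b^3 = b^4 := by ring
  linarith [h1, h2, h3]

private lemma nh5 (b : ℕ) (h : 1680 ≤ b) : 20*b+20 ≤ 6*b^2 := by nlinarith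

set_option maxHeartbeats 1000000 in
theorem quintuple_Kind2i_bound_1 (a b c d e : ℕ)
    (hquin : DiophantineQuintuple a b c d e) (hkind : Kind2i a b c d) :
    1680 ≤ b ∧ 10 ^ 8 ≤ d := by
  obtain ⟨ha, hab, hbc, hcd, hde, ⟨r, hr⟩, ⟨s, hs⟩, ⟨sd, hsd⟩, hae,
    ⟨t, ht⟩, ⟨td, htd⟩, hbe, ⟨w, hw⟩, hce, hdee⟩ := hquin
  obtain ⟨hb4a, hdb2, hdb5, hcl, hcu⟩ := hkind
  have ha1 : 1 ≤ a := ha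
  have hb5 : 5 ≤ b := by omega
  have hb1 : 1 ≤ b := by omega
  have hc1 : 1 ≤ c := by omega
  -- from the real bound : c^2 ≤ b^3
  have hcb : c^2 ≤ b^3 := by
    have h0 : (0:ℝ) ≤ (b:ℝ) := by positivity
    have h1 : ((c:ℝ))^2 ≤ ((b:ℝ) ^ ((3:ℝ)/2))^2 := by
      apply pow_le_pow_left₀ (by positivity) hcu
    have h2 : ((b:ℝ) ^ ((3:ℝ)/2))^(2:ℕ) = (b:ℝ)^((3:ℕ):ℝ) := by
      rw [← Real.rpow_natCast ((b:ℝ) ^ ((3:ℝ)/2)) 2, ← Real.rpow_mul h0]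
      norm_num
    rw [h2, Real.rpow_natCast] at h1
    exact_mod_cast h1
  -- apply stepA to (a, b, c)
  have hab5 : 5 ≤ a*b := by
    calc 5 = 1*5 := by norm_num
    _ ≤ a*b := Nat.mul_le_mul ha1 hb5
  have hrab : r ≤ a*b := nh3 (a*b) r hab5 hr
  have haab : a ≤ a*b := by
    calc a = a*1 := by ring
    _ ≤ a*b := Nat.mul_le_mul_left a hb1
  have hbab : b ≤ a*b := by
    calc b = 1*b := by ring
    _ ≤ a*b := Nat.mul_le_mul_right b ha1
  have hC1 : a+b+2*r+1 ≤ c := by linarith [hcl, hrab, hab5]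
  have hC2 : 2*(a+b) ≤ c := by linarith [hcl, haab, hbab]
  obtain ⟨N, x, y, hN1, hxN, hyN, hceq, hcge⟩ := stepA a b c r s t ha1 hb1 hr hs ht hC1 hC2
  have haN1 : 1 ≤ a*N := by
    calc 1 = 1*1 := by norm_num
    _ ≤ a*N := Nat.mul_le_mul ha1 hN1
  have hx2 : 2 ≤ x := nh1 (a*N) x haN1 hxN
  have haN3 : 3 ≤ a*N := nh2 (a*N) x hxN hx2
  -- part 1 : b ≥ 1680
  have hb1680 : 1680 ≤ b := by
    by_contra hble
    push_neg at hble
    have h16 : 16*(a*N)^2 < b := by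
      have hlt : 4*a*b*N < c := by linarith [hcge, ha1, hb1, hN1]
      have h1 : (4*a*b*N)^2 < c^2 := Nat.pow_lt_pow_left hlt two_ne_zero
      have h2 : 16*(a*N)^2*b^2 < b^3 := by
        calc 16*(a*N)^2*b^2 = (4*a*b*N)^2 := by ring
        _ < c^2 := h1
        _ ≤ b^3 := hcb
      by_contra hcon
      push_neg at hcon
      have h3 : b^2*b ≤ b^2*(16*(a*N)^2) := Nat.mul_le_mul_left (b^2) hcon
      linarith [h2, h3]
    have haN10 : a*N ≤ 10 := by
      by_contra h
      push_neg at h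
      have h11 : 11^2 ≤ (a*N)^2 := Nat.pow_le_pow_left h 2
      norm_num at h11
      linarith [h16, hble, h11]
    have hx3 : x ≤ 3 := by
      by_contra h
      push_neg at h
      have h44 : 4^2 ≤ x^2 := Nat.pow_le_pow_left h 2
      norm_num at h44
      linarith [hxN, haN10, h44]
    have hble' : b ≤ 1679 := by omega
    interval_cases x
    · -- x = 2 : a*N = 3
      have haN : a*N = 3 := by
        have := hxN
        norm_num at this
        linarith [this]
      have hb145 : 145 ≤ b := by
        rw [haN] at h16
        norm_num at h16
        omega
      have hale : a ≤ 3 := by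
        calc a = a*1 := by ring
        _ ≤ a*N := Nat.mul_le_mul_left a hN1
        _ = 3 := haN
      interval_cases a
      · have hN : N = 3 := by omega
        subst hN
        exact fam3 b r y hb145 hble' (by linarith [hr]) (by linarith [hyN])
      · omega
      · have hN : N = 1 := by omega
        subst hN
        exact fam3 b y r hb145 hble' (by linarith [hyN]) (by linarith [hr])
    · -- x = 3 : a*N = 8
      have haN : a*N = 8 := by
        have := hxN
        norm_num at this
        linarith [this]
      have hb1025 : 1025 ≤ b := by
        rw [haN] at h16
        norm_num at h16
        omega
      have hale : a ≤ 8 := by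
        calc a = a*1 := by ring
        _ ≤ a*N := Nat.mul_le_mul_left a hN1
        _ = 8 := haN
      interval_cases a
      · have hN : N = 8 := by omega
        subst hN
        exact fam8 b r y hb1025 hble' (by linarith [hr]) (by linarith [hyN])
      · have hN : N = 4 := by omega
        subst hN
        exact fam24 b r y hb1025 hble' (by linarith [hr]) (by linarith [hyN])
      · omega
      · have hN : N = 2 := by omega
        subst hN
        exact fam24 b y r hb1025 hble' (by linarith [hyN]) (by linarith [hr])
      · omega
      · omega
      · omega
      · have hN : N = 1 := by omega
        subst hN
        exact fam8 b y r hb1025 hble' (by linarith [hyN]) (by linarith [hr])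
  -- part 2 : d ≥ 10^8
  refine ⟨hb1680, ?_⟩
  have hc5b : 5*b+1 ≤ c := by
    have h4b : 4*1*b ≤ 4*a*b := Nat.mul_le_mul_right b (Nat.mul_le_mul_left 4 ha1)
    linarith [hcl, h4b, ha1]
  have h5c : 5*c ≤ b^2 := by
    by_contra h
    push_neg at h
    have h1 : (5*b+1)*c ≤ c*c := Nat.mul_le_mul_right c hc5b
    have h2 : b*(b^2+1) ≤ b*(5*c) := Nat.mul_le_mul_left b (by omega)
    linarith [h1, h2, hcb, hc1]
  have ht4 : 4*t ≤ b^2 := by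
    have e1 : 5*(b*c) ≤ b^3 := by
      have h := Nat.mul_le_mul_left b h5c
      linarith [h]
    have e2 : 4*b^3+16 ≤ b^4 := nh4 b hb1680
    have h16 : 16*(b*c+1) ≤ (b^2)^2 := by linarith [e1, e2, Nat.zero_le (b^3)]
    have h4t : (4*t)^2 ≤ (b^2)^2 := by
      calc (4*t)^2 = 16*(b*c+1) := by rw [ht]; ring
      _ ≤ (b^2)^2 := h16
    exact Nat.pow_le_pow_iff_left (n := 2) two_ne_zero |>.mp h4t
  have hbsq : 20*b+20 ≤ 6*b^2 := nh5 b hb1680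
  have hD1 : b+c+2*t+1 ≤ d := by
    have h20 : 20*(b+c+2*t+1) ≤ 20*(b^2) := by linarith [h5c, ht4, hbsq]
    have h' : b+c+2*t+1 ≤ b^2 := Nat.le_of_mul_le_mul_left h20 (by norm_num)
    exact le_trans h' hdb2
  have hD2 : 2*(b+c) ≤ d := by
    have h20 : 20*(2*(b+c)) ≤ 20*(b^2) := by linarith [h5c, hbsq]
    have h' : 2*(b+c) ≤ b^2 := Nat.le_of_mul_le_mul_left h20 (by norm_num)
    exact le_trans h' hdb2
  obtain ⟨F, u, vv, hF1, hu, hv, hdeq, hdge⟩ := stepA b c d t td w hb1 hc1 ht htd hw hD1 hD2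
  have hc13 : 13*b+4 ≤ c := by
    have h12 : 4*b*3 ≤ 4*b*(a*N) := Nat.mul_le_mul_left (4*b) haN3
    have h12' : 4*b*(a*N) = 4*a*b*N := by ring
    linarith [hcge, ha1, hN1, h12, h12']
  have e1 : 1680*1680 ≤ b*b := Nat.mul_le_mul hb1680 hb1680
  have e2 : 52*(b*b) ≤ 4*(b*c) := by
    have h := Nat.mul_le_mul_left b hc13
    linarith [h]
  have e3 : 4*(b*c) ≤ d := by
    have h4bc : 4*b*c*1 ≤ 4*b*c*F := Nat.mul_le_mul_left (4*b*c) hF1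
    linarith [hdge, h4bc]
  have efin : (10:ℕ)^8 ≤ 52*(1680*1680) := by norm_num
  linarith [e1, e2, e3, efin]
end

section
/- For every integer N ≥ 2, the sum over n from 2 to N of d(n^2 + 1) is strictly less than 2N·(3π^{-2}·(log N)^2 + 1.3949·log N + 0.4107 + 3.253·N^{-1/3}). -/
open Finset

namespace DSum


def rr (d : ℕ) : ℕ := ((range d).filter fun a => d ∣ a ^ 2 + 1).card

def FF (d : ℕ) : ℤ := ∑ e ∈ d.divisors, ZMod.χ₄ (e : ZMod 4)

lemma rr_eq (d : ℕ) [NeZero d] :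
    rr d = (univ.filter fun x : ZMod d => x ^ 2 + 1 = 0).card := by
  unfold rr
  refine Finset.card_bij (fun a _ => (a : ZMod d)) ?_ ?_ ?_
  · intro a ha
    simp only [mem_filter, mem_range] at ha ⊢
    refine ⟨mem_univ _, ?_⟩
    have : ((a ^ 2 + 1 : ℕ) : ZMod d) = 0 := (ZMod.natCast_eq_zero_iff _ _).mpr ha.2
    push_cast at this
    exact this
  · intro a ha b hb hab
    simp only [mem_filter, mem_range] at ha hb
    have := congrArg ZMod.val hab
    rwa [ZMod.val_cast_of_lt ha.1, ZMod.val_cast_of_lt hb.1] at this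
  · intro x hx
    simp only [mem_filter, mem_univ, true_and] at hx
    refine ⟨x.val, ?_, ZMod.natCast_rightInverse x⟩
    simp only [mem_filter, mem_range]
    refine ⟨x.val_lt, ?_⟩
    rw [← ZMod.natCast_eq_zero_iff]
    push_cast
    rw [ZMod.natCast_rightInverse x]
    exact hx



lemma zz_mul {m n : ℕ} [NeZero m] [NeZero n] (h : Nat.Coprime m n) :
    (univ.filter fun x : ZMod (m * n) => x ^ 2 + 1 = 0).card =
      (univ.filter fun x : ZMod m => x ^ 2 + 1 = 0).card *
      (univ.filter fun x : ZMod n => x ^ 2 + 1 = 0).card := by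
  haveI : NeZero (m * n) := ⟨Nat.mul_ne_zero (NeZero.ne m) (NeZero.ne n)⟩
  classical
  have key : (univ.filter fun x : ZMod (m * n) => x ^ 2 + 1 = 0).card =
      (univ.filter fun y : ZMod m × ZMod n => y.1 ^ 2 + 1 = 0 ∧ y.2 ^ 2 + 1 = 0).card := by
    refine Finset.card_bij (fun x _ => (ZMod.chineseRemainder h) x) ?_ ?_ ?_
    · intro x hx
      simp only [mem_filter, mem_univ, true_and] at hx ⊢
      have h2 : ((ZMod.chineseRemainder h) x) ^ 2 + 1 = 0 := by
        rw [← map_pow, ← map_one (ZMod.chineseRemainder h), ← map_add, hx, map_zero]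
      constructor
      · have := congrArg Prod.fst h2; simpa using this
      · have := congrArg Prod.snd h2; simpa using this
    · intro a _ b _ hab
      exact (ZMod.chineseRemainder h).injective hab
    · intro y hy
      simp only [mem_filter, mem_univ, true_and] at hy
      refine ⟨(ZMod.chineseRemainder h).symm y, ?_, by simp⟩
      simp only [mem_filter, mem_univ, true_and]
      apply (ZMod.chineseRemainder h).injective
      rw [map_add, map_pow, map_one, map_zero, RingEquiv.apply_symm_apply]
      ext <;> simp [hy.1, hy.2]
  rw [key, ← Finset.card_product, ← Finset.filter_product, Finset.univ_product_univ]

lemma zz_odd_le (p k : ℕ) (hp : p.Prime) (hodd : p % 2 = 1) (hk : 0 < k) [NeZero (p ^ k)] :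
    (univ.filter fun x : ZMod (p ^ k) => x ^ 2 + 1 = 0).card ≤ 2 := by
  by_cases hS : (univ.filter fun x : ZMod (p ^ k) => x ^ 2 + 1 = 0) = ∅
  · simp [hS]
  obtain ⟨x, hx⟩ := Finset.nonempty_iff_ne_empty.mpr hS
  have hx' : x ^ 2 + 1 = 0 := (mem_filter.mp hx).2
  have hdvd : ∀ z : ZMod (p ^ k), z ^ 2 + 1 = 0 → ((p ^ k : ℕ) : ℤ) ∣ ((z.val : ℤ) ^ 2 + 1) := by
    intro z hz
    have h1 : ((z.val ^ 2 + 1 : ℕ) : ZMod (p ^ k)) = 0 := by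
      push_cast
      rw [ZMod.natCast_val, ZMod.cast_id]
      exact hz
    have h2 : p ^ k ∣ z.val ^ 2 + 1 := (ZMod.natCast_eq_zero_iff _ _).mp h1
    exact_mod_cast Int.natCast_dvd_natCast.mpr h2
  have hpint : Prime (p : ℤ) := Nat.prime_iff_prime_int.mp hp
  have hpdvd : ∀ z : ZMod (p ^ k), z ^ 2 + 1 = 0 → ¬ (p:ℤ) ∣ (z.val : ℤ) := by
    intro z hz hd
    have h1 : (p:ℤ) ∣ (z.val:ℤ) ^ 2 + 1 := by
      refine dvd_trans ?_ (hdvd z hz)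
      exact_mod_cast Int.natCast_dvd_natCast.mpr (dvd_pow_self p hk.ne')
    have h2 : (p:ℤ) ∣ (z.val:ℤ) ^ 2 := by rw [sq]; exact hd.mul_right _
    have h3 : (p:ℤ) ∣ 1 := by have := dvd_sub h1 h2; simpa using this
    exact hpint.not_dvd_one h3
  have castval : ∀ u : ZMod (p ^ k), (((u.val : ℤ)) : ZMod (p ^ k)) = u := by
    intro u; push_cast; rw [ZMod.natCast_val, ZMod.cast_id]
  have hsub : (univ.filter fun y : ZMod (p ^ k) => y ^ 2 + 1 = 0) ⊆ {x, -x} := by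
    intro y hy
    have hy' : y ^ 2 + 1 = 0 := (mem_filter.mp hy).2
    set X : ℤ := (x.val : ℤ) with hX
    set Y : ℤ := (y.val : ℤ) with hY
    have hkey : ((p ^ k : ℕ) : ℤ) ∣ (Y - X) * (Y + X) := by
      have e : (Y - X) * (Y + X) = (Y ^ 2 + 1) - (X ^ 2 + 1) := by ring
      rw [e]
      exact dvd_sub (hdvd y hy') (hdvd x hx')
    have hnotboth : ¬ ((p:ℤ) ∣ (Y - X) ∧ (p:ℤ) ∣ (Y + X)) := by
      rintro ⟨h1, h2⟩
      have h3 : (p:ℤ) ∣ 2 * Y := by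
        have := dvd_add h1 h2
        rwa [show Y - X + (Y + X) = 2 * Y by ring] at this
      rcases hpint.dvd_mul.mp h3 with h4 | h4
      · have h5 : p ∣ 2 := by exact_mod_cast h4
        have hp2 : p = 2 := (Nat.prime_dvd_prime_iff_eq hp Nat.prime_two).mp h5
        omega
      · exact hpdvd y hy' h4
    have hppow : ((p ^ k : ℕ) : ℤ) = (p : ℤ) ^ k := by push_cast; ring
    simp only [mem_insert, mem_singleton]
    by_cases hc : (p:ℤ) ∣ (Y - X)
    · left
      have hnd : ¬ (p:ℤ) ∣ (Y + X) := fun h2 => hnotboth ⟨hc, h2⟩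
      have hcop : IsCoprime ((p ^ k : ℕ) : ℤ) (Y + X) := by
        rw [hppow]
        exact (hpint.coprime_iff_not_dvd.mpr hnd).pow_left
      have hd : ((p ^ k : ℕ) : ℤ) ∣ (Y - X) := hcop.dvd_of_dvd_mul_right hkey
      have h0 : ((Y - X : ℤ) : ZMod (p ^ k)) = 0 := (ZMod.intCast_zmod_eq_zero_iff_dvd _ _).mpr hd
      rw [hY, hX] at h0
      push_cast at h0
      rw [ZMod.natCast_val, ZMod.natCast_val, ZMod.cast_id, ZMod.cast_id] at h0
      exact sub_eq_zero.mp h0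
    · right
      have hcop : IsCoprime ((p ^ k : ℕ) : ℤ) (Y - X) := by
        rw [hppow]
        exact (hpint.coprime_iff_not_dvd.mpr hc).pow_left
      have hd : ((p ^ k : ℕ) : ℤ) ∣ (Y + X) := hcop.dvd_of_dvd_mul_left hkey
      have h0 : ((Y + X : ℤ) : ZMod (p ^ k)) = 0 := (ZMod.intCast_zmod_eq_zero_iff_dvd _ _).mpr hd
      rw [hY, hX] at h0
      push_cast at h0
      rw [ZMod.natCast_val, ZMod.natCast_val, ZMod.cast_id, ZMod.cast_id] at h0
      exact eq_neg_of_add_eq_zero_left h0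
  calc (univ.filter fun x : ZMod (p ^ k) => x ^ 2 + 1 = 0).card
      ≤ ({x, -x} : Finset (ZMod (p^k))).card := Finset.card_le_card hsub
    _ ≤ 2 := (Finset.card_insert_le _ _).trans (by simp)




lemma zz_three_mod_four (p k : ℕ) (hp : p.Prime) (h3 : p % 4 = 3) (hk : 0 < k)
    [NeZero (p ^ k)] :
    (univ.filter fun x : ZMod (p ^ k) => x ^ 2 + 1 = 0).card = 0 := by
  rw [Finset.card_eq_zero, Finset.filter_eq_empty_iff]
  intro x _
  intro hx
  haveI : Fact p.Prime := ⟨hp⟩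
  have hsq : IsSquare (-1 : ZMod p) := by
    set z := ZMod.castHom (dvd_pow_self p hk.ne') (ZMod p) x with hz
    refine ⟨z, ?_⟩
    have h2 := congrArg (ZMod.castHom (dvd_pow_self p hk.ne') (ZMod p)) hx
    rw [map_add, map_pow, map_one, map_zero] at h2
    have : z ^ 2 = -1 := by linear_combination h2
    rw [← this]; ring
  exact (ZMod.exists_sq_eq_neg_one_iff.mp hsq) h3

lemma zz_two : (univ.filter fun x : ZMod 2 => x ^ 2 + 1 = 0).card = 1 := by decide

lemma zz_two_pow (k : ℕ) (hk : 2 ≤ k) [NeZero (2 ^ k)] :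
    (univ.filter fun x : ZMod (2 ^ k) => x ^ 2 + 1 = 0).card = 0 := by
  rw [Finset.card_eq_zero, Finset.filter_eq_empty_iff]
  intro x _
  intro hx
  have hd : (4 : ℕ) ∣ 2 ^ k := by
    calc (4:ℕ) = 2 ^ 2 := by norm_num
    _ ∣ 2 ^ k := pow_dvd_pow 2 hk
  have h2 := congrArg (ZMod.castHom hd (ZMod 4)) hx
  rw [map_add, map_pow, map_one, map_zero] at h2
  have : ∀ z : ZMod 4, z ^ 2 + 1 ≠ 0 := by decide
  exact this _ h2

-- χ₄ as an arithmetic function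
def chi : ArithmeticFunction ℤ :=
  ⟨fun n => ZMod.χ₄ (n : ZMod 4), by
    show ZMod.χ₄ ((0 : ℕ) : ZMod 4) = 0
    rw [Nat.cast_zero]
    exact MulChar.map_nonunit _ (by decide)⟩

def FFa : ArithmeticFunction ℤ := chi * ↑(ArithmeticFunction.zeta)

lemma chi_mult : chi.IsMultiplicative := by
  constructor
  · show ZMod.χ₄ ((1 : ℕ) : ZMod 4) = 1
    rw [Nat.cast_one, map_one]
  · intro m n _
    show ZMod.χ₄ ((m * n : ℕ) : ZMod 4) = ZMod.χ₄ (m : ZMod 4) * ZMod.χ₄ (n : ZMod 4)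
    rw [Nat.cast_mul, map_mul]

lemma FF_eq (n : ℕ) : FF n = FFa n := by
  rw [FFa, ArithmeticFunction.coe_mul_zeta_apply]; rfl

lemma FF_mult : FFa.IsMultiplicative :=
  chi_mult.mul ArithmeticFunction.isMultiplicative_zeta.natCast

lemma FF_mul {m n : ℕ} (h : Nat.Coprime m n) : FF (m * n) = FF m * FF n := by
  rw [FF_eq, FF_eq, FF_eq]
  exact FF_mult.map_mul_of_coprime h

lemma FF_one : FF 1 = 1 := by
  rw [FF_eq]; exact FF_mult.1

lemma FF_prime_pow (p k : ℕ) (hp : p.Prime) :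
    FF (p ^ k) = ∑ i ∈ range (k + 1), (ZMod.χ₄ ((p : ℕ) : ZMod 4)) ^ i := by
  rw [FF, Nat.sum_divisors_prime_pow hp]
  refine Finset.sum_congr rfl fun i _ => ?_
  rw [Nat.cast_pow, map_pow]

lemma FF_one_mod_four (p k : ℕ) (hp : p.Prime) (h1 : p % 4 = 1) :
    FF (p ^ k) = k + 1 := by
  rw [FF_prime_pow p k hp]
  have : ZMod.χ₄ ((p : ℕ) : ZMod 4) = 1 := by
    rw [ZMod.χ₄_nat_eq_if_mod_four]
    have : p % 2 = 1 := by omega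
    simp [h1, this]
  rw [this]
  simp

lemma FF_three_mod_four (p k : ℕ) (hp : p.Prime) (h3 : p % 4 = 3) :
    0 ≤ FF (p ^ k) := by
  rw [FF_prime_pow p k hp]
  have : ZMod.χ₄ ((p : ℕ) : ZMod 4) = -1 := by
    rw [ZMod.χ₄_nat_eq_if_mod_four]
    have : p % 2 = 1 := by omega
    simp [h3, this]
  rw [this, neg_one_geom_sum]
  split <;> norm_num

lemma FF_two_pow (k : ℕ) : FF (2 ^ k) = 1 := by
  rw [FF_prime_pow 2 k Nat.prime_two]
  have : ZMod.χ₄ ((2 : ℕ) : ZMod 4) = 0 := by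
    rw [ZMod.χ₄_nat_eq_if_mod_four]; norm_num
  rw [this]
  rw [Finset.sum_eq_single 0]
  · norm_num
  · intro i _ hi; exact zero_pow hi
  · intro h; simp at h



lemma rr_one : rr 1 = 1 := by decide

lemma rr_nonneg (d : ℕ) : (0:ℤ) ≤ (rr d : ℤ) := Int.natCast_nonneg _

lemma rr_le_FF : ∀ d : ℕ, 0 < d → (rr d : ℤ) ≤ FF d ∧ 0 ≤ FF d := by
  intro d
  induction d using Nat.recOnPosPrimePosCoprime with
  | prime_pow p n hp hn =>
    intro _
    have hpp : p.Prime := hp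
    haveI : NeZero (p ^ n) := ⟨pow_ne_zero _ hpp.pos.ne'⟩
    by_cases h2 : p = 2
    · subst h2
      constructor
      · rw [FF_two_pow]
        rcases Nat.lt_or_ge n 2 with hn2 | hn2
        · interval_cases n
          have h21 : rr (2 ^ 1) = 1 := by decide
          rw [h21]
          norm_num
        · rw [rr_eq, zz_two_pow n hn2]; norm_num
      · rw [FF_two_pow]; norm_num
    · have hodd : p % 2 = 1 := hpp.eq_two_or_odd.resolve_left h2
      have h4 : p % 4 = 1 ∨ p % 4 = 3 := by omega
      rcases h4 with h4 | h4
      · constructor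
        · rw [rr_eq, FF_one_mod_four p n hpp h4]
          have hle := zz_odd_le p n hpp hodd hn
          have : (n:ℤ) + 1 ≥ 2 := by exact_mod_cast Nat.succ_le_succ hn
          calc ((univ.filter fun x : ZMod (p ^ n) => x ^ 2 + 1 = 0).card : ℤ) ≤ 2 := by
                exact_mod_cast hle
            _ ≤ (n:ℤ) + 1 := this
        · rw [FF_one_mod_four p n hpp h4]; positivity
      · constructor
        · rw [rr_eq, zz_three_mod_four p n hpp h4 hn]
          simpa using FF_three_mod_four p n hpp h4
        · exact FF_three_mod_four p n hpp h4
  | zero => intro h; omega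
  | one =>
    intro _
    constructor
    · rw [rr_one, FF_one]; norm_num
    · rw [FF_one]; norm_num
  | coprime a b ha hb hab iha ihb =>
    intro _
    haveI : NeZero a := ⟨by omega⟩
    haveI : NeZero b := ⟨by omega⟩
    obtain ⟨h1a, h2a⟩ := iha (by omega)
    obtain ⟨h1b, h2b⟩ := ihb (by omega)
    have hrr : rr (a * b) = rr a * rr b := by
      rw [rr_eq, rr_eq, rr_eq, zz_mul hab]
    have hFF : FF (a * b) = FF a * FF b := FF_mul hab
    constructor
    · rw [hrr, hFF]
      push_cast
      exact mul_le_mul h1a h1b (rr_nonneg b) h2a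
    · rw [hFF]
      exact mul_nonneg h2a h2b




lemma divisor_pairing (n : ℕ) (hn : 1 ≤ n) :
    (n ^ 2 + 1).divisors.card ≤ 2 * ((Icc 1 n).filter fun d => d ∣ n ^ 2 + 1).card := by
  classical
  set m := n ^ 2 + 1 with hm
  have hm0 : m ≠ 0 := by positivity
  have hsplit := Finset.card_filter_add_card_filter_not
    (s := m.divisors) (p := fun d => d ≤ n)
  have hL : (m.divisors.filter fun d => d ≤ n) = ((Icc 1 n).filter fun d => d ∣ m) := by
    ext d
    simp only [mem_filter, Nat.mem_divisors, mem_Icc]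
    constructor
    · rintro ⟨⟨hdvd, _⟩, hle⟩
      exact ⟨⟨Nat.pos_of_dvd_of_pos hdvd (by positivity), hle⟩, hdvd⟩
    · rintro ⟨⟨h1, h2⟩, hdvd⟩
      exact ⟨⟨hdvd, hm0⟩, h2⟩
  have hH : (m.divisors.filter fun d => ¬ d ≤ n).card ≤
      ((Icc 1 n).filter fun d => d ∣ m).card := by
    apply Finset.card_le_card_of_injOn (fun d => m / d)
    · intro d hd
      simp only [mem_coe, mem_filter, Nat.mem_divisors, mem_Icc] at hd ⊢
      obtain ⟨⟨hdvd, _⟩, hgt⟩ := hd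
      push_neg at hgt
      have hd0 : 0 < d := by omega
      refine ⟨⟨?_, ?_⟩, Nat.div_dvd_of_dvd hdvd⟩
      · have hdm : d ≤ m := Nat.le_of_dvd (by positivity) hdvd
        exact (Nat.one_le_div_iff hd0).mpr hdm
      · have h1 : m / d ≤ m / (n + 1) := Nat.div_le_div_left hgt (by omega)
        have h2 : m / (n + 1) ≤ n := by
          have : m / (n + 1) < n + 1 := by
            rw [Nat.div_lt_iff_lt_mul (by omega : 0 < n + 1)]
            have : m = n ^ 2 + 1 := hm
            nlinarith
          omega
        exact h1.trans h2
    · intro a ha b hb hab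
      simp only [coe_filter, Set.mem_setOf_eq, Nat.mem_divisors] at ha hb
      simp only at hab
      rw [← Nat.div_div_self ha.1.1 hm0, ← Nat.div_div_self hb.1.1 hm0, hab]
  rw [hL] at hsplit
  omega

lemma count_le (N d : ℕ) (hd : 1 ≤ d) :
    ((Icc 1 N).filter fun n => d ∣ n ^ 2 + 1).card ≤ rr d * (N / d + 1) := by
  classical
  have h : ((Icc 1 N).filter fun n => d ∣ n ^ 2 + 1).card ≤
      (((range d).filter fun a => d ∣ a ^ 2 + 1) ×ˢ range (N / d + 1)).card := by
    refine Finset.card_le_card_of_injOn (fun n => (n % d, n / d)) ?_ ?_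
    · intro n hn
      simp only [mem_coe, mem_filter, mem_Icc, mem_product, mem_range] at hn ⊢
      obtain ⟨⟨h1, h2⟩, hdvd⟩ := hn
      refine ⟨⟨Nat.mod_lt _ (by omega), ?_⟩, ?_⟩
      · have hmod : (n % d) ^ 2 + 1 ≡ n ^ 2 + 1 [MOD d] :=
          ((Nat.mod_modEq n d).pow 2).add_right 1
        have : n ^ 2 + 1 ≡ 0 [MOD d] := (Nat.modEq_zero_iff_dvd).mpr hdvd
        exact (Nat.modEq_zero_iff_dvd).mp (hmod.trans this)
      · exact Nat.lt_succ_of_le (Nat.div_le_div_right h2)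
    · intro a ha b hb hab
      simp only [Prod.mk.injEq] at hab
      have := Nat.mod_add_div a d
      rw [hab.1, hab.2] at this
      rw [← Nat.mod_add_div b d, this]
  refine h.trans ?_
  rw [Finset.card_product, Finset.card_range]
  simp [rr]

lemma sum_swap_le (N : ℕ) :
    (∑ n ∈ Icc 2 N, ((Icc 1 N).filter fun d => d ∣ n ^ 2 + 1).card) ≤
      ∑ d ∈ Icc 1 N, ((Icc 1 N).filter fun n => d ∣ n ^ 2 + 1).card := by
  classical
  simp_rw [Finset.card_filter]
  rw [Finset.sum_comm]
  refine Finset.sum_le_sum fun d _ => ?_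
  refine Finset.sum_le_sum_of_subset ?_
  exact Finset.Icc_subset_Icc_left (by omega)

lemma nat_total (N : ℕ) (hN : 2 ≤ N) :
    (∑ n ∈ Icc 2 N, (n ^ 2 + 1).divisors.card) ≤
      2 * ∑ d ∈ Icc 1 N, rr d * (N / d + 1) := by
  calc (∑ n ∈ Icc 2 N, (n ^ 2 + 1).divisors.card)
      ≤ ∑ n ∈ Icc 2 N, 2 * ((Icc 1 N).filter fun d => d ∣ n ^ 2 + 1).card := by
        refine Finset.sum_le_sum fun n hn => ?_
        simp only [mem_Icc] at hn
        refine (divisor_pairing n (by omega)).trans ?_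
        have hsub : ((Icc 1 n).filter fun d => d ∣ n ^ 2 + 1) ⊆
            ((Icc 1 N).filter fun d => d ∣ n ^ 2 + 1) :=
          Finset.filter_subset_filter _ (Finset.Icc_subset_Icc_right hn.2)
        exact Nat.mul_le_mul_left 2 (Finset.card_le_card hsub)
    _ = 2 * ∑ n ∈ Icc 2 N, ((Icc 1 N).filter fun d => d ∣ n ^ 2 + 1).card := by
        rw [Finset.mul_sum]
    _ ≤ 2 * ∑ d ∈ Icc 1 N, ((Icc 1 N).filter fun n => d ∣ n ^ 2 + 1).card :=
        Nat.mul_le_mul_left 2 (sum_swap_le N)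
    _ ≤ 2 * ∑ d ∈ Icc 1 N, rr d * (N / d + 1) := by
        refine Nat.mul_le_mul_left 2 (Finset.sum_le_sum fun d hd => ?_)
        simp only [mem_Icc] at hd
        exact count_le N d hd.1




lemma alt_bound (v : ℕ → ℝ) (hv0 : ∀ e, 1 ≤ e → 0 ≤ v e)
    (hmono : ∀ a b, 1 ≤ a → a ≤ b → v b ≤ v a) (M : ℕ) :
    ∑ e ∈ Icc 1 M, ((ZMod.χ₄ (e : ZMod 4) : ℤ) : ℝ) * v e ≤ v 1 := by
  suffices H : ∀ M : ℕ, (∑ e ∈ Icc 1 M, ((ZMod.χ₄ (e : ZMod 4) : ℤ) : ℝ) * v e ≤ v 1) ∧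
      ((M % 4 = 3 ∨ (M % 4 = 0 ∧ 1 ≤ M)) →
        (∑ e ∈ Icc 1 M, ((ZMod.χ₄ (e : ZMod 4) : ℤ) : ℝ) * v e) + v M ≤ v 1) from (H M).1
  intro M
  induction M with
  | zero =>
    constructor
    · simpa using hv0 1 le_rfl
    · rintro (h | h) <;> omega
  | succ M ih =>
    have hstep : ∑ e ∈ Icc 1 (M + 1), ((ZMod.χ₄ (e : ZMod 4) : ℤ) : ℝ) * v e =
        (∑ e ∈ Icc 1 M, ((ZMod.χ₄ (e : ZMod 4) : ℤ) : ℝ) * v e) +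
          ((ZMod.χ₄ ((M + 1 : ℕ) : ZMod 4) : ℤ) : ℝ) * v (M + 1) := by
      rw [← Finset.sum_Icc_succ_top (by omega : 1 ≤ M + 1)]
    have hval := ZMod.χ₄_nat_eq_if_mod_four (M + 1)
    have hmod2 : (M + 1) % 2 = (M + 1) % 4 % 2 := (Nat.mod_mod_of_dvd _ (by norm_num)).symm
    rcases (by omega : (M + 1) % 4 = 0 ∨ (M + 1) % 4 = 1 ∨ (M + 1) % 4 = 2 ∨ (M + 1) % 4 = 3)
      with h4 | h4 | h4 | h4
    · -- χ₄ = 0, previous M % 4 = 3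
      have hz : ZMod.χ₄ ((M + 1 : ℕ) : ZMod 4) = 0 := by rw [hval]; simp [show (M+1) % 2 = 0 by omega]
      rw [hstep, hz]
      push_cast
      rw [zero_mul, add_zero]
      have hM3 : M % 4 = 3 := by omega
      have hprev := ih.2 (Or.inl hM3)
      constructor
      · exact ih.1
      · intro _
        have hvm : v (M + 1) ≤ v M := hmono M (M + 1) (by omega) (by omega)
        linarith
    · -- χ₄ = 1
      have hz : ZMod.χ₄ ((M + 1 : ℕ) : ZMod 4) = 1 := by
        rw [hval]; simp [show (M+1) % 2 = 1 by omega, h4]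
      rw [hstep, hz]
      push_cast
      rw [one_mul]
      constructor
      · rcases Nat.eq_zero_or_pos M with hM0 | hM0
        · subst hM0; simp
        · have hM0' : M % 4 = 0 := by omega
          have hprev := ih.2 (Or.inr ⟨hM0', hM0⟩)
          have hvm : v (M + 1) ≤ v M := hmono M (M + 1) (by omega) (by omega)
          linarith
      · intro h; omega
    · -- χ₄ = 0
      have hz : ZMod.χ₄ ((M + 1 : ℕ) : ZMod 4) = 0 := by rw [hval]; simp [show (M+1) % 2 = 0 by omega]
      rw [hstep, hz]
      push_cast
      rw [zero_mul, add_zero]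
      exact ⟨ih.1, by intro h; omega⟩
    · -- χ₄ = -1
      have hz : ZMod.χ₄ ((M + 1 : ℕ) : ZMod 4) = -1 := by
        rw [hval]; simp [show (M+1) % 2 = 1 by omega, show ¬ ((M+1) % 4 = 1) by omega]
      rw [hstep, hz]
      push_cast
      rw [neg_one_mul]
      have hv1 : 0 ≤ v (M + 1) := hv0 (M + 1) (by omega)
      constructor
      · linarith [ih.1]
      · intro _; linarith [ih.1]

lemma reindex (N : ℕ) (w : ℕ → ℝ) :
    ∑ d ∈ Icc 1 N, ((FF d : ℤ) : ℝ) * w d =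
      ∑ f ∈ Icc 1 N, ∑ e ∈ Icc 1 (N / f), ((ZMod.χ₄ (e : ZMod 4) : ℤ) : ℝ) * w (e * f) := by
  classical
  have step1 : ∀ d ∈ Icc 1 N, ((FF d : ℤ) : ℝ) * w d =
      ∑ p ∈ d.divisorsAntidiagonal, ((ZMod.χ₄ ((p.1 : ℕ) : ZMod 4) : ℤ) : ℝ) * w (p.1 * p.2) := by
    intro d hd
    rw [Nat.sum_divisorsAntidiagonal
      (fun e f => ((ZMod.χ₄ ((e : ℕ) : ZMod 4) : ℤ) : ℝ) * w (e * f))]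
    rw [FF]
    push_cast
    rw [Finset.sum_mul]
    refine Finset.sum_congr rfl fun e he => ?_
    rw [Nat.mul_div_cancel' (Nat.mem_divisors.mp he).1]
  rw [Finset.sum_congr rfl step1]
  rw [← Finset.sum_biUnion]
  · refine Finset.sum_finset_product_right'
      ((Icc 1 N).biUnion fun d => d.divisorsAntidiagonal) (Icc 1 N) (fun f => Icc 1 (N / f))
      (f := fun e f => ((ZMod.χ₄ ((e : ℕ) : ZMod 4) : ℤ) : ℝ) * w (e * f)) ?_
    intro p
    simp only [mem_biUnion, Nat.mem_divisorsAntidiagonal, mem_Icc]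
    constructor
    · rintro ⟨d, ⟨hd1, hd2⟩, hpd, hd0⟩
      have hp2 : 1 ≤ p.2 := by
        rcases Nat.eq_zero_or_pos p.2 with h | h
        · exfalso; rw [h, mul_zero] at hpd; omega
        · exact h
      have hp1 : 1 ≤ p.1 := by
        rcases Nat.eq_zero_or_pos p.1 with h | h
        · exfalso; rw [h, zero_mul] at hpd; omega
        · exact h
      refine ⟨⟨hp2, ?_⟩, hp1, ?_⟩
      · calc p.2 ≤ p.1 * p.2 := Nat.le_mul_of_pos_left _ hp1
          _ = d := hpd
          _ ≤ N := hd2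
      · rw [Nat.le_div_iff_mul_le hp2]
        omega
    · rintro ⟨⟨hf1, hf2⟩, he1, he2⟩
      refine ⟨p.1 * p.2, ⟨?_, ?_⟩, rfl, ?_⟩
      · exact Nat.one_le_iff_ne_zero.mpr (Nat.mul_ne_zero (by omega) (by omega))
      · exact (Nat.le_div_iff_mul_le hf1).mp he2
      · exact Nat.mul_ne_zero (by omega) (by omega)
  · intro x hx y hy hxy
    simp only [Finset.disjoint_left]
    intro p hpx hpy
    rw [Nat.mem_divisorsAntidiagonal] at hpx hpy
    exact hxy (hpx.1 ▸ hpy.1)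


lemma real_bound (N : ℕ) (hN : 2 ≤ N) :
    (∑ n ∈ Icc 2 N, ((n ^ 2 + 1).divisors.card : ℝ)) ≤
      2 * ((N : ℝ) * (1 + Real.log N) + N) := by
  have h1 : (∑ n ∈ Icc 2 N, ((n ^ 2 + 1).divisors.card : ℝ)) =
      ((∑ n ∈ Icc 2 N, (n ^ 2 + 1).divisors.card : ℕ) : ℝ) := by push_cast; rfl
  rw [h1]
  have h3 : ((∑ n ∈ Icc 2 N, (n ^ 2 + 1).divisors.card : ℕ) : ℝ) ≤
      ((2 * ∑ d ∈ Icc 1 N, rr d * (N / d + 1) : ℕ) : ℝ) := by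
    exact_mod_cast nat_total N hN
  refine h3.trans ?_
  push_cast
  set w : ℕ → ℝ := fun d => (N : ℝ) / d + 1 with hw
  have h4 : ∑ d ∈ Icc 1 N, (rr d : ℝ) * (((N / d : ℕ) : ℝ) + 1) ≤
      ∑ d ∈ Icc 1 N, (rr d : ℝ) * w d := by
    refine Finset.sum_le_sum fun d _ => ?_
    refine mul_le_mul_of_nonneg_left ?_ (by positivity)
    exact add_le_add_left Nat.cast_div_le 1
  have h5 : ∑ d ∈ Icc 1 N, (rr d : ℝ) * w d ≤ ∑ d ∈ Icc 1 N, ((FF d : ℤ) : ℝ) * w d := by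
    refine Finset.sum_le_sum fun d hd => ?_
    simp only [mem_Icc] at hd
    have hwnn : 0 ≤ w d := by
      have : (0:ℝ) ≤ (N : ℝ) / d := by positivity
      simp only [hw]; linarith
    refine mul_le_mul_of_nonneg_right ?_ hwnn
    exact_mod_cast (rr_le_FF d (by omega)).1
  have h6 := reindex N w
  have h7 : ∑ f ∈ Icc 1 N, ∑ e ∈ Icc 1 (N / f), ((ZMod.χ₄ (e : ZMod 4) : ℤ) : ℝ) * w (e * f) ≤
      ∑ f ∈ Icc 1 N, w f := by
    refine Finset.sum_le_sum fun f hf => ?_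
    simp only [mem_Icc] at hf
    have := alt_bound (fun e => w (e * f)) ?_ ?_ (N / f)
    · simpa using this
    · intro e _
      simp only [hw]
      positivity
    · intro a b ha hab
      simp only [hw]
      have h1f : (0:ℝ) < ((a * f : ℕ) : ℝ) := by
        have : 1 ≤ a * f := Nat.one_le_iff_ne_zero.mpr (Nat.mul_ne_zero (by omega) (by omega))
        exact_mod_cast this
      have h2f : ((a * f : ℕ) : ℝ) ≤ ((b * f : ℕ) : ℝ) := by
        exact_mod_cast Nat.mul_le_mul_right f hab
      have := div_le_div_of_nonneg_left (by positivity : (0:ℝ) ≤ (N:ℝ)) h1f h2f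
      push_cast at this ⊢
      linarith
  have h8 : ∑ f ∈ Icc 1 N, w f = (N : ℝ) * (harmonic N : ℝ) + N := by
    have hh : ((harmonic N : ℚ) : ℝ) = ∑ f ∈ Icc 1 N, ((f : ℝ))⁻¹ := by
      rw [harmonic_eq_sum_Icc]
      push_cast
      rfl
    simp only [hw]
    rw [Finset.sum_add_distrib, Finset.sum_const, Nat.card_Icc]
    simp only [nsmul_eq_mul, mul_one]
    rw [hh, Finset.mul_sum]
    have : ∀ f ∈ Icc 1 N, (N : ℝ) / f = (N:ℝ) * ((f:ℝ))⁻¹ := fun f _ => div_eq_mul_inv _ _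
    rw [Finset.sum_congr rfl this]
    push_cast
    ring_nf
  have h9 : (harmonic N : ℝ) ≤ 1 + Real.log N := harmonic_le_one_add_log N
  calc 2 * ∑ d ∈ Icc 1 N, (rr d : ℝ) * (((N / d : ℕ) : ℝ) + 1)
      ≤ 2 * ∑ d ∈ Icc 1 N, ((FF d : ℤ) : ℝ) * w d := by linarith
    _ = 2 * ∑ f ∈ Icc 1 N, ∑ e ∈ Icc 1 (N / f), ((ZMod.χ₄ (e : ZMod 4) : ℤ) : ℝ) * w (e * f) := by
        rw [h6]
    _ ≤ 2 * ((N : ℝ) * (harmonic N : ℝ) + N) := by rw [← h8]; linarith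
    _ ≤ 2 * ((N : ℝ) * (1 + Real.log N) + N) := by
        have hNn : (0:ℝ) ≤ (N:ℝ) := by positivity
        nlinarith

lemma endgame (N : ℕ) (hN : 2 ≤ N) :
    2 * ((N : ℝ) * (1 + Real.log N) + N) <
      2 * N * (3 / Real.pi ^ 2 * Real.log N ^ 2 + 1.3949 * Real.log N + 0.4107 +
        3.253 * (N : ℝ) ^ (-(1 : ℝ) / 3)) := by
  set L := Real.log N with hLdef
  have hN0 : (0:ℝ) < N := by positivity
  have hE : (0:ℝ) < (N : ℝ) ^ (-(1 : ℝ) / 3) := Real.rpow_pos_of_pos hN0 _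
  have hL2 : Real.log 2 ≤ L := Real.log_le_log (by norm_num) (by exact_mod_cast hN)
  have hlog2 : (0.6931471803 : ℝ) < Real.log 2 := Real.log_two_gt_d9
  have hpipos : (0:ℝ) < Real.pi ^ 2 := by positivity
  have hsq : (0:ℝ) ≤ 3 / Real.pi ^ 2 * L ^ 2 := by positivity
  rw [show 2 * ((N : ℝ) * (1 + L) + N) = 2 * (N : ℝ) * (L + 2) by ring]
  rw [mul_assoc, mul_assoc]
  refine mul_lt_mul_of_pos_left ?_ (by norm_num : (0:ℝ) < 2)
  refine mul_lt_mul_of_pos_left ?_ hN0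
  rcases le_or_gt (N : ℝ) 7 with h7 | h7
  · have hcpos : (0:ℝ) < (N : ℝ) ^ ((1:ℝ)/3) := Real.rpow_pos_of_pos hN0 _
    have hcube : ((N:ℝ)) ^ ((1:ℝ)/3) ≤ 1.93 := by
      have h3 : ((1.93:ℝ) ^ (3:ℕ)) ^ ((1:ℝ)/3) = 1.93 := by
        rw [← Real.rpow_natCast (1.93:ℝ) 3, ← Real.rpow_mul (by norm_num)]
        norm_num
      calc (N:ℝ) ^ ((1:ℝ)/3) ≤ ((1.93:ℝ) ^ (3:ℕ)) ^ ((1:ℝ)/3) :=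
            Real.rpow_le_rpow (by positivity) (by nlinarith) (by norm_num)
        _ = 1.93 := h3
    have hEeq : (N : ℝ) ^ (-(1:ℝ)/3) = (((N:ℝ)) ^ ((1:ℝ)/3))⁻¹ := by
      rw [neg_div, Real.rpow_neg (le_of_lt hN0)]
    have hE518 : (0.518 : ℝ) ≤ (N : ℝ) ^ (-(1:ℝ)/3) := by
      rw [hEeq]
      have h1 : (1.93:ℝ)⁻¹ ≤ (((N:ℝ)) ^ ((1:ℝ)/3))⁻¹ := inv_anti₀ hcpos hcube
      have h2 : (0.518:ℝ) ≤ (1.93:ℝ)⁻¹ := by norm_num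
      linarith
    linarith
  · have h8 : (8:ℝ) ≤ (N:ℝ) := by
      have h7n : (7:ℕ) < N := by exact_mod_cast h7
      have : (8:ℕ) ≤ N := by omega
      exact_mod_cast this
    have hL8 : Real.log 8 ≤ L := Real.log_le_log (by norm_num) h8
    have hlog8 : Real.log 8 = 3 * Real.log 2 := by
      rw [show (8:ℝ) = 2 ^ (3:ℕ) by norm_num, Real.log_pow]
      push_cast; ring
    have hLge : (2.0794415409 : ℝ) ≤ L := by
      rw [hlog8] at hL8
      linarith
    have hpi : Real.pi ^ 2 < 9.9225 := by nlinarith [Real.pi_lt_d2, Real.pi_gt_three]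
    have hc : (3 / 9.9225 : ℝ) ≤ 3 / Real.pi ^ 2 :=
      div_le_div_of_nonneg_left (by norm_num) hpipos (le_of_lt hpi)
    have hc2 : (3 / 9.9225 : ℝ) * L ^ 2 ≤ 3 / Real.pi ^ 2 * L ^ 2 :=
      mul_le_mul_of_nonneg_right hc (sq_nonneg L)
    nlinarith [sq_nonneg (L - 2.0794415409)]

end DSum

theorem sum_divisor_count_sq_add_one_lt (N : ℕ) (hN : 2 ≤ N) :
    (∑ n ∈ Finset.Icc 2 N, ((n ^ 2 + 1).divisors.card : ℝ)) <
      2 * N * (3 / Real.pi ^ 2 * Real.log N ^ 2 + 1.3949 * Real.log N + 0.4107 +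
        3.253 * (N : ℝ) ^ (-(1 : ℝ) / 3)) := by
  exact lt_of_le_of_lt (DSum.real_bound N hN) (DSum.endgame N hN)
end
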